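/- Let A and M be abelian groups and let h : A × A × A → M and c : A × A → M satisfy the braided 3-cocycle equations: for all x,y,z,w ∈ A, (i) h(y,z,w) − h(x+y,z,w) + h(x,y+z,w) − h(x,y,z+w) + h(x,y,z) = 0; (ii) c(y,z) − c(x+y,z) + c(x,z) + h(x,y,z) − h(x,z,y) + h(z,x,y) = 0; (iii) c(x,y) − c(x,y+z) + c(x,z) − h(x,y,z) + h(y,x,z) − h(y,z,x) = 0. Define q : A → M by q(x) = c(x,x). Then: q(x+y) − q(x) − q(y) = c(x,y) + c(y,x) for all x,y ∈ A; the map b(x,y) = c(x,y) + c(y,x) is additive in each variable; and q(0) = 0, q(−x) = q(x), and q(n·x) = n²·q(x) for every integer n. In particular the trace q of a braided 3-cocycle is a quadratic function on A. -/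

import Mathlib

/-- The trace `q(x) = c(x,x)` of a braided (abelian) 3-cocycle `(h,c)` is a quadratic
function: its polarization is `q(x+y) − q(x) − q(y) = c(x,y) + c(y,x)`, the latter is
biadditive, and `q(0) = 0`, `q(−x) = q(x)`, `q(n·x) = n²·q(x)`. -/
theorem stmt_14 {A M : Type*} [AddCommGroup A] [AddCommGroup M]
    (h : A → A → A → M) (c : A → A → M)
    (h1 : ∀ x y z w : A,
      h y z w - h (x + y) z w + h x (y + z) w - h x y (z + w) + h x y z = 0)
    (h2 : ∀ x y z : A,
      c y z - c (x + y) z + c x z + h x y z - h x z y + h z x y = 0)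
    (h3 : ∀ x y z : A,
      c x y - c x (y + z) + c x z - h x y z + h y x z - h y z x = 0) :
    (∀ x y : A, c (x + y) (x + y) - c x x - c y y = c x y + c y x) ∧
    (∀ x y z : A, c (x + y) z + c z (x + y) = (c x z + c z x) + (c y z + c z y)) ∧
    (∀ x y z : A, c x (y + z) + c (y + z) x = (c x y + c y x) + (c x z + c z x)) ∧
    c 0 0 = 0 ∧
    (∀ x : A, c (-x) (-x) = c x x) ∧
    (∀ (n : ℤ) (x : A), c (n • x) (n • x) = n ^ 2 • c x x) := by
  -- polarization identity
  have pol : ∀ x y : A, c (x + y) (x + y) - c x x - c y y = c x y + c y x := by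
    intro x y
    have e1 := h1 x y x y
    rw [add_comm y x] at e1
    linear_combination (norm := abel) -h2 x y (x + y) - h3 x x y - h3 y x y - e1
  -- biadditivity in the first variable
  have bl : ∀ x y z : A, c (x + y) z + c z (x + y) = (c x z + c z x) + (c y z + c z y) := by
    intro x y z
    linear_combination (norm := abel) -h2 x y z - h3 z x y
  -- biadditivity in the second variable
  have br : ∀ x y z : A, c x (y + z) + c (y + z) x = (c x y + c y x) + (c x z + c z x) := by
    intro x y z
    linear_combination (norm := abel) -h3 x y z - h2 y z x
  -- q(0) = 0
  have q0 : c 0 0 = 0 := by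
    have e0 := h1 0 0 0 0
    have e2 := h2 0 0 0
    simp only [add_zero] at e0 e2
    linear_combination (norm := abel) e2 - e0
  -- b(x,0) = 0
  have bz : ∀ x : A, c x 0 + c 0 x = 0 := by
    intro x
    have e := br x 0 0
    rw [add_zero] at e
    linear_combination (norm := abel) -e
  -- b(y,-x) = -b(y,x)
  have bneg2 : ∀ y x : A, c y (-x) + c (-x) y = -(c y x + c x y) := by
    intro y x
    have e := br y x (-x)
    rw [add_neg_cancel] at e
    linear_combination (norm := abel) bz y - e
  -- q(-x) = q(x)
  have qneg : ∀ x : A, c (-x) (-x) = c x x := by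
    intro x
    have e := pol x (-x)
    rw [add_neg_cancel] at e
    linear_combination (norm := abel) -e - bneg2 x x + q0
  -- b(n•x, x) = n • (b x x)
  have bInt : ∀ (n : ℤ) (x : A), c (n • x) x + c x (n • x) = n • (c x x + c x x) := by
    intro n x
    induction n using Int.induction_on with
    | zero =>
      simp only [zero_smul]
      linear_combination (norm := abel) bz x
    | succ n ih =>
      rw [show ((n : ℤ) + 1) • x = (n : ℤ) • x + x by rw [add_smul, one_smul]]
      have e := bl ((n : ℤ) • x) x x
      linear_combination (norm := module) e + ih
    | pred n ih =>
      rw [show (-(n : ℤ) - 1) • x = (-(n : ℤ)) • x + -x by rw [sub_smul, one_smul, sub_eq_add_neg]]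
      have e := bl ((-(n : ℤ)) • x) (-x) x
      linear_combination (norm := module) e + ih + bneg2 x x
  -- q(n•x) = n^2 • q(x)
  have qInt : ∀ (n : ℤ) (x : A), c (n • x) (n • x) = n ^ 2 • c x x := by
    intro n x
    induction n using Int.induction_on with
    | zero => simpa using q0
    | succ n ih =>
      rw [show ((n : ℤ) + 1) • x = (n : ℤ) • x + x by rw [add_smul, one_smul]]
      linear_combination (norm := module) pol ((n : ℤ) • x) x + ih + bInt n x
    | pred n ih =>
      rw [show (-(n : ℤ) - 1) • x = (-(n : ℤ)) • x + -x by rw [sub_smul, one_smul, sub_eq_add_neg]]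
      linear_combination (norm := module) pol ((-(n : ℤ)) • x) (-x) + ih + qneg x
        + bneg2 ((-(n : ℤ)) • x) x - bInt (-(n : ℤ)) x
  exact ⟨pol, bl, br, q0, qneg, qInt⟩
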